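/- If X and Y are random variables on a finite probability space with H(Z|X)=0 and H(Z|Y)=0 (taking W trivial), then I(X;Y) ≥ H(Z). -/

import Mathlib

open Finset

/-- Probability mass of the event `X = a` under weights `p`. -/
noncomputable def pmass {Ω α : Type} [Fintype Ω] [DecidableEq α]
    (p : Ω → ℝ) (X : Ω → α) (a : α) : ℝ :=
  ∑ ω, if X ω = a then p ω else 0

/-- Shannon entropy (base 2) of a random variable `X` on a finite space. -/
noncomputable def ent {Ω α : Type} [Fintype Ω] [Fintype α] [DecidableEq α]
    (p : Ω → ℝ) (X : Ω → α) : ℝ :=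
  ∑ a, -(pmass p X a * Real.logb 2 (pmass p X a))

/-- Conditional Shannon entropy `H(X|Y) = H(X,Y) - H(Y)`. -/
noncomputable def condEnt {Ω α β : Type} [Fintype Ω] [Fintype α] [Fintype β]
    [DecidableEq α] [DecidableEq β] (p : Ω → ℝ) (X : Ω → α) (Y : Ω → β) : ℝ :=
  ent p (fun ω => (X ω, Y ω)) - ent p Y

/-- Conditional mutual information `I(X;Y|W) = H(X|W) + H(Y|W) - H(X,Y|W)`. -/
noncomputable def condMI {Ω α β γ : Type} [Fintype Ω] [Fintype α] [Fintype β] [Fintype γ]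
    [DecidableEq α] [DecidableEq β] [DecidableEq γ]
    (p : Ω → ℝ) (X : Ω → α) (Y : Ω → β) (W : Ω → γ) : ℝ :=
  condEnt p X W + condEnt p Y W - condEnt p (fun ω => (X ω, Y ω)) W

/-- Mutual information `I(X;Y) = H(X) + H(Y) - H(X,Y)`. -/
noncomputable def mutualInfo {Ω α β : Type} [Fintype Ω] [Fintype α] [Fintype β]
    [DecidableEq α] [DecidableEq β] (p : Ω → ℝ) (X : Ω → α) (Y : Ω → β) : ℝ :=
  ent p X + ent p Y - ent p (fun ω => (X ω, Y ω))

section helpers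
variable {Ω α β γ : Type} [Fintype Ω] [Fintype α] [Fintype β] [Fintype γ]
  [DecidableEq α] [DecidableEq β] [DecidableEq γ]

lemma pmass_nonneg (p : Ω → ℝ) (hp0 : ∀ ω, 0 ≤ p ω) (f : Ω → α) (a : α) :
    0 ≤ pmass p f a :=
  Finset.sum_nonneg fun ω _ => by split <;> simp [hp0 ω]

lemma sum_pmass (p : Ω → ℝ) (f : Ω → α) : ∑ a, pmass p f a = ∑ ω, p ω := by
  simp only [pmass]
  rw [Finset.sum_comm]
  simp

lemma pmass_comp (p : Ω → ℝ) (f : Ω → α) (e : α → β) (b : β) :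
    pmass p (fun ω => e (f ω)) b = ∑ a, if e a = b then pmass p f a else 0 := by
  simp only [pmass]
  rw [show (∑ a : α, if e a = b then ∑ ω : Ω, if f ω = a then p ω else 0 else 0)
      = ∑ a : α, ∑ ω : Ω, if f ω = a then (if e a = b then p ω else 0) else 0 from
    Finset.sum_congr rfl fun a _ => by split <;> simp]
  rw [Finset.sum_comm]
  refine Finset.sum_congr rfl fun ω _ => ?_
  rw [Finset.sum_ite_eq]
  simp

end helpers
section more
set_option linter.unusedSectionVars false
variable {Ω α β γ : Type} [Fintype Ω] [Fintype α] [Fintype β] [Fintype γ]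
  [DecidableEq α] [DecidableEq β] [DecidableEq γ]

lemma marg_snd (p : Ω → ℝ) (f : Ω → α) (g : Ω → β) (b : β) :
    ∑ a, pmass p (fun ω => (f ω, g ω)) (a, b) = pmass p g b := by
  simp only [pmass]
  rw [Finset.sum_comm]
  refine Finset.sum_congr rfl fun ω _ => ?_
  simp [Prod.ext_iff, ite_and, Finset.sum_ite_eq]

lemma marg_fst (p : Ω → ℝ) (f : Ω → α) (g : Ω → β) (a : α) :
    ∑ b, pmass p (fun ω => (f ω, g ω)) (a, b) = pmass p f a := by
  simp only [pmass]
  rw [Finset.sum_comm]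
  refine Finset.sum_congr rfl fun ω _ => ?_
  simp [Prod.ext_iff, ite_and, Finset.sum_ite_eq]

lemma marg_mid (p : Ω → ℝ) (f : Ω → α) (g : Ω → β) (h : Ω → γ) (a : α) (c : γ) :
    ∑ b, pmass p (fun ω => ((f ω, g ω), h ω)) ((a, b), c)
      = pmass p (fun ω => (f ω, h ω)) (a, c) := by
  simp only [pmass]
  rw [Finset.sum_comm]
  refine Finset.sum_congr rfl fun ω _ => ?_
  simp [Prod.ext_iff, ite_and, Finset.sum_ite_eq]

lemma marg_left (p : Ω → ℝ) (f : Ω → α) (g : Ω → β) (h : Ω → γ) (b : β) (c : γ) :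
    ∑ a, pmass p (fun ω => ((f ω, g ω), h ω)) ((a, b), c)
      = pmass p (fun ω => (g ω, h ω)) (b, c) := by
  simp only [pmass]
  rw [Finset.sum_comm]
  refine Finset.sum_congr rfl fun ω _ => ?_
  simp [Prod.ext_iff, ite_and, Finset.sum_ite_eq]

lemma neg_mul_logb_le {q t : ℝ} (hq : 0 ≤ q) (hqt : q ≤ t) :
    -(q * Real.logb 2 t) ≤ -(q * Real.logb 2 q) := by
  rcases eq_or_lt_of_le hq with h0 | hpos
  · simp [← h0]
  · have := Real.logb_le_logb_of_le (by norm_num : (1:ℝ) < 2) hpos hqt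
    nlinarith

lemma ent_comp_inj (p : Ω → ℝ) (f : Ω → α) (e : α → β) (he : Function.Injective e) :
    ent p (fun ω => e (f ω)) = ent p f := by
  have key : ∀ b : β, pmass p (fun ω => e (f ω)) b
      = ∑ a, if e a = b then pmass p f a else 0 := pmass_comp p f e
  have h0 : ∀ b ∉ Finset.univ.image e,
      -(pmass p (fun ω => e (f ω)) b * Real.logb 2 (pmass p (fun ω => e (f ω)) b)) = 0 := by
    intro b hb
    have : pmass p (fun ω => e (f ω)) b = 0 := by
      rw [key]
      refine Finset.sum_eq_zero fun a _ => ?_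
      have : e a ≠ b := fun hh => hb (Finset.mem_image.2 ⟨a, Finset.mem_univ a, hh⟩)
      simp [this]
    simp [this]
  have hsub : (Finset.univ.image e) ⊆ Finset.univ := Finset.subset_univ _
  simp only [ent]
  rw [← Finset.sum_subset hsub (fun x _ hx => h0 x hx),
    Finset.sum_image (fun x _ y _ hxy => he hxy)]
  refine Finset.sum_congr rfl fun a _ => ?_
  have hpm : pmass p (fun ω => e (f ω)) (e a) = pmass p f a := by
    rw [key, Finset.sum_eq_single a
      (fun a' _ hne => by rw [if_neg (fun hh => hne (he hh))]) (by simp)]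
    simp
  rw [hpm]

lemma ent_mono (p : Ω → ℝ) (hp0 : ∀ ω, 0 ≤ p ω) (f : Ω → α) (h : Ω → γ) :
    ent p h ≤ ent p (fun ω => (f ω, h ω)) := by
  rw [ent, ent, Fintype.sum_prod_type, Finset.sum_comm]
  refine Finset.sum_le_sum fun c _ => ?_
  have ht : pmass p h c = ∑ a, pmass p (fun ω => (f ω, h ω)) (a, c) := (marg_snd p f h c).symm
  calc -(pmass p h c * Real.logb 2 (pmass p h c))
      = ∑ a, -(pmass p (fun ω => (f ω, h ω)) (a, c) * Real.logb 2 (pmass p h c)) := by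
        rw [ht, Finset.sum_mul, ← ht]
        exact (Finset.sum_neg_distrib _).symm
    _ ≤ ∑ a, -(pmass p (fun ω => (f ω, h ω)) (a, c)
          * Real.logb 2 (pmass p (fun ω => (f ω, h ω)) (a, c))) := by
        refine Finset.sum_le_sum fun a _ => ?_
        refine neg_mul_logb_le (pmass_nonneg p hp0 _ (a, c)) ?_
        rw [ht]
        exact Finset.single_le_sum (fun a' _ => pmass_nonneg p hp0 _ (a', c)) (Finset.mem_univ a)
end more

lemma key_ineq {q r s t : ℝ} (hq : 0 ≤ q) (hr : 0 ≤ r) (hs : 0 ≤ s) (ht : 0 ≤ t)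
    (hqr : q ≤ r) (hqs : q ≤ s) (hrt : r ≤ t) :
    (q - r * s / t) / Real.log 2
      ≤ q * Real.logb 2 q + q * Real.logb 2 t - q * Real.logb 2 r - q * Real.logb 2 s := by
  have h2 : (0:ℝ) < Real.log 2 := Real.log_pos one_lt_two
  rcases eq_or_lt_of_le hq with h0 | hposq
  · rw [← h0]
    simp only [zero_mul, sub_zero, zero_sub, add_zero, zero_add, neg_nonpos]
    apply div_nonpos_of_nonpos_of_nonneg _ h2.le
    simp only [zero_sub, neg_nonpos]
    positivity
  · have hposr : 0 < r := lt_of_lt_of_le hposq hqr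
    have hposs : 0 < s := lt_of_lt_of_le hposq hqs
    have hpost : 0 < t := lt_of_lt_of_le hposr hrt
    have hu : 0 < r * s / (q * t) := by positivity
    have hlog := Real.log_le_sub_one_of_pos hu
    have hlogu : Real.log (r * s / (q * t))
        = Real.log r + Real.log s - Real.log q - Real.log t := by
      rw [Real.log_div (by positivity) (by positivity), Real.log_mul hposr.ne' hposs.ne',
        Real.log_mul hposq.ne' hpost.ne']
      ring
    have hqu : q * (r * s / (q * t)) = r * s / t := by
      field_simp
    have hmul := mul_le_mul_of_nonneg_left hlog hq
    rw [hlogu] at hmul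
    have main : q - r * s / t
        ≤ q * Real.log q + q * Real.log t - q * Real.log r - q * Real.log s := by
      nlinarith [hmul, hqu]
    calc (q - r * s / t) / Real.log 2
        ≤ (q * Real.log q + q * Real.log t - q * Real.log r - q * Real.log s) / Real.log 2 :=
          (div_le_div_iff_of_pos_right h2).mpr main
      _ = q * Real.logb 2 q + q * Real.logb 2 t - q * Real.logb 2 r - q * Real.logb 2 s := by
          simp only [Real.logb]
          ring

lemma submod_abstract {α β γ : Type} [Fintype α] [Fintype β] [Fintype γ]
    (q : α → β → γ → ℝ) (r : α → γ → ℝ) (s : β → γ → ℝ) (t : γ → ℝ)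
    (hq0 : ∀ a b c, 0 ≤ q a b c)
    (hqr : ∀ a c, ∑ b, q a b c = r a c)
    (hqs : ∀ b c, ∑ a, q a b c = s b c)
    (hrt : ∀ c, ∑ a, r a c = t c)
    (hst : ∀ c, ∑ b, s b c = t c)
    (h1 : ∑ c, t c = 1) :
    (∑ c, ∑ a, ∑ b, -(q a b c * Real.logb 2 (q a b c))) + ∑ c, -(t c * Real.logb 2 (t c))
      ≤ (∑ c, ∑ a, -(r a c * Real.logb 2 (r a c)))
        + ∑ c, ∑ b, -(s b c * Real.logb 2 (s b c)) := by
  have h2 : (0:ℝ) < Real.log 2 := Real.log_pos one_lt_two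
  have hr0 : ∀ a c, 0 ≤ r a c := fun a c => by
    rw [← hqr]; exact Finset.sum_nonneg fun b _ => hq0 a b c
  have hs0 : ∀ b c, 0 ≤ s b c := fun b c => by
    rw [← hqs]; exact Finset.sum_nonneg fun a _ => hq0 a b c
  have ht0 : ∀ c, 0 ≤ t c := fun c => by
    rw [← hrt]; exact Finset.sum_nonneg fun a _ => hr0 a c
  have hqler : ∀ a b c, q a b c ≤ r a c := fun a b c => by
    rw [← hqr]; exact Finset.single_le_sum (fun b' _ => hq0 a b' c) (Finset.mem_univ b)
  have hqles : ∀ a b c, q a b c ≤ s b c := fun a b c => by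
    rw [← hqs]; exact Finset.single_le_sum (fun a' _ => hq0 a' b c) (Finset.mem_univ a)
  have hrlet : ∀ a c, r a c ≤ t c := fun a c => by
    rw [← hrt]; exact Finset.single_le_sum (fun a' _ => hr0 a' c) (Finset.mem_univ a)
  -- rewrite r-entropy as triple sum
  have er : (∑ c, ∑ a, -(r a c * Real.logb 2 (r a c)))
      = ∑ c, ∑ a, ∑ b, -(q a b c * Real.logb 2 (r a c)) := by
    refine Finset.sum_congr rfl fun c _ => Finset.sum_congr rfl fun a _ => ?_
    rw [← hqr, Finset.sum_mul]
    exact (Finset.sum_neg_distrib _).symm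
  have es : (∑ c, ∑ b, -(s b c * Real.logb 2 (s b c)))
      = ∑ c, ∑ a, ∑ b, -(q a b c * Real.logb 2 (s b c)) := by
    rw [show (∑ c, ∑ a, ∑ b, -(q a b c * Real.logb 2 (s b c)))
        = ∑ c, ∑ b, ∑ a, -(q a b c * Real.logb 2 (s b c)) from
      Finset.sum_congr rfl fun c _ => Finset.sum_comm]
    refine Finset.sum_congr rfl fun c _ => Finset.sum_congr rfl fun b _ => ?_
    rw [← hqs, Finset.sum_mul]
    exact (Finset.sum_neg_distrib _).symm
  have et : (∑ c, -(t c * Real.logb 2 (t c)))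
      = ∑ c, ∑ a, ∑ b, -(q a b c * Real.logb 2 (t c)) := by
    refine Finset.sum_congr rfl fun c _ => ?_
    calc -(t c * Real.logb 2 (t c)) = ∑ a, -(r a c * Real.logb 2 (t c)) := by
          rw [← hrt, Finset.sum_mul]
          exact (Finset.sum_neg_distrib _).symm
      _ = ∑ a, ∑ b, -(q a b c * Real.logb 2 (t c)) := by
          refine Finset.sum_congr rfl fun a _ => ?_
          rw [← hqr, Finset.sum_mul]
          exact (Finset.sum_neg_distrib _).symm
  rw [er, es, et]
  rw [← Finset.sum_add_distrib, ← Finset.sum_add_distrib, ← sub_nonneg, ← Finset.sum_sub_distrib]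
  simp only [← Finset.sum_add_distrib, ← Finset.sum_sub_distrib]
  have key : ∀ c a b, (q a b c - r a c * s b c / t c) / Real.log 2
      ≤ -(q a b c * Real.logb 2 (r a c)) + -(q a b c * Real.logb 2 (s b c))
        - (-(q a b c * Real.logb 2 (q a b c)) + -(q a b c * Real.logb 2 (t c))) := by
    intro c a b
    have := key_ineq (hq0 a b c) (hr0 a c) (hs0 b c) (ht0 c) (hqler a b c) (hqles a b c)
      (hrlet a c)
    linarith
  have lower : (∑ c, ∑ a, ∑ b, (q a b c - r a c * s b c / t c) / Real.log 2)
      ≤ ∑ c, ∑ a, ∑ b, (-(q a b c * Real.logb 2 (r a c)) + -(q a b c * Real.logb 2 (s b c))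
        - (-(q a b c * Real.logb 2 (q a b c)) + -(q a b c * Real.logb 2 (t c)))) :=
    Finset.sum_le_sum fun c _ => Finset.sum_le_sum fun a _ => Finset.sum_le_sum fun b _ =>
      key c a b
  refine le_trans ?_ lower
  -- show 0 ≤ ∑ (q - rs/t)/log2
  have hq1 : (∑ c, ∑ a, ∑ b, q a b c) = 1 := by
    rw [← h1]
    refine Finset.sum_congr rfl fun c _ => ?_
    rw [← hrt]
    exact Finset.sum_congr rfl fun a _ => hqr a c
  have hS : (∑ c, ∑ a, ∑ b, r a c * s b c / t c) ≤ 1 := by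
    have hc : ∀ c, (∑ a, ∑ b, r a c * s b c / t c) = t c * t c / t c := by
      intro c
      have inner : ∀ a, (∑ b, r a c * s b c / t c) = r a c * t c / t c := by
        intro a
        rw [← Finset.sum_div, ← Finset.mul_sum, hst]
      rw [Finset.sum_congr rfl fun a _ => inner a, ← Finset.sum_div, ← Finset.sum_mul, hrt]
    calc (∑ c, ∑ a, ∑ b, r a c * s b c / t c) = ∑ c, t c * t c / t c :=
          Finset.sum_congr rfl fun c _ => hc c
      _ ≤ ∑ c, t c := Finset.sum_le_sum fun c _ => by
          rcases eq_or_ne (t c) 0 with h | h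
          · simp [h]
          · rw [mul_div_assoc, div_self h, mul_one]
      _ = 1 := h1
  have : (∑ c, ∑ a, ∑ b, (q a b c - r a c * s b c / t c) / Real.log 2)
      = ((∑ c, ∑ a, ∑ b, q a b c) - ∑ c, ∑ a, ∑ b, r a c * s b c / t c) / Real.log 2 := by
    simp only [sub_div, Finset.sum_sub_distrib, Finset.sum_div]
  rw [this, hq1]
  exact div_nonneg (by linarith) h2.le

section main
set_option linter.unusedSectionVars false
variable {Ω α β γ : Type} [Fintype Ω] [Fintype α] [Fintype β] [Fintype γ]
  [DecidableEq α] [DecidableEq β] [DecidableEq γ]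

lemma ent_submod (p : Ω → ℝ) (hp0 : ∀ ω, 0 ≤ p ω) (hp1 : ∑ ω, p ω = 1)
    (f : Ω → α) (g : Ω → β) (h : Ω → γ) :
    ent p (fun ω => ((f ω, g ω), h ω)) + ent p h
      ≤ ent p (fun ω => (f ω, h ω)) + ent p (fun ω => (g ω, h ω)) := by
  have habs := submod_abstract
    (fun a b c => pmass p (fun ω => ((f ω, g ω), h ω)) ((a, b), c))
    (fun a c => pmass p (fun ω => (f ω, h ω)) (a, c))
    (fun b c => pmass p (fun ω => (g ω, h ω)) (b, c))
    (fun c => pmass p h c)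
    (fun a b c => pmass_nonneg p hp0 _ _)
    (fun a c => marg_mid p f g h a c)
    (fun b c => marg_left p f g h b c)
    (fun c => marg_snd p f h c)
    (fun c => marg_snd p g h c)
    (by rw [show (∑ c, pmass p h c) = ∑ ω, p ω from sum_pmass p h]; exact hp1)
  have eq1 : ent p (fun ω => ((f ω, g ω), h ω))
      = ∑ c, ∑ a, ∑ b, -(pmass p (fun ω => ((f ω, g ω), h ω)) ((a, b), c)
          * Real.logb 2 (pmass p (fun ω => ((f ω, g ω), h ω)) ((a, b), c))) := by
    rw [ent, Fintype.sum_prod_type, Finset.sum_comm]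
    exact Finset.sum_congr rfl fun c _ => Fintype.sum_prod_type _
  have eq2 : ent p (fun ω => (f ω, h ω))
      = ∑ c, ∑ a, -(pmass p (fun ω => (f ω, h ω)) (a, c)
          * Real.logb 2 (pmass p (fun ω => (f ω, h ω)) (a, c))) := by
    rw [ent, Fintype.sum_prod_type, Finset.sum_comm]
  have eq3 : ent p (fun ω => (g ω, h ω))
      = ∑ c, ∑ b, -(pmass p (fun ω => (g ω, h ω)) (b, c)
          * Real.logb 2 (pmass p (fun ω => (g ω, h ω)) (b, c))) := by
    rw [ent, Fintype.sum_prod_type, Finset.sum_comm]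
  rw [eq1, eq2, eq3, ent]
  exact habs

end main

/-- If `H(Z|X) = 0` and `H(Z|Y) = 0` then `I(X;Y) ≥ H(Z)`. -/
theorem stmt_1 {Ω α β γ : Type} [Fintype Ω] [Fintype α] [Fintype β] [Fintype γ]
    [DecidableEq α] [DecidableEq β] [DecidableEq γ]
    (p : Ω → ℝ) (hp0 : ∀ ω, 0 ≤ p ω) (hp1 : ∑ ω, p ω = 1)
    (X : Ω → α) (Y : Ω → β) (Z : Ω → γ)
    (hZX : condEnt p Z X = 0) (hZY : condEnt p Z Y = 0) :
    ent p Z ≤ mutualInfo p X Y := by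
  rw [condEnt, sub_eq_zero] at hZX hZY
  rw [mutualInfo]
  -- swap equalities
  have e1 : ent p (fun ω => (X ω, Y ω)) = ent p (fun ω => (Y ω, X ω)) :=
    ent_comp_inj p (fun ω => (Y ω, X ω)) Prod.swap Prod.swap_injective
  have e2 : ent p (fun ω => (X ω, Z ω)) = ent p (fun ω => (Z ω, X ω)) :=
    ent_comp_inj p (fun ω => (Z ω, X ω)) Prod.swap Prod.swap_injective
  have e3 : ent p (fun ω => (Y ω, Z ω)) = ent p (fun ω => (Z ω, Y ω)) :=
    ent_comp_inj p (fun ω => (Z ω, Y ω)) Prod.swap Prod.swap_injective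
  have inj4 : Function.Injective (fun w : γ × (α × β) => ((w.1, w.2.2), w.2.1)) := by
    intro u v hv
    obtain ⟨c, a, b⟩ := u; obtain ⟨c', a', b'⟩ := v
    simp [Prod.ext_iff] at hv ⊢
    tauto
  have e4 : ent p (fun ω => ((Z ω, Y ω), X ω)) = ent p (fun ω => (Z ω, (X ω, Y ω))) :=
    ent_comp_inj p (fun ω => (Z ω, (X ω, Y ω)))
      (fun w : γ × (α × β) => ((w.1, w.2.2), w.2.1)) inj4
  have inj5 : Function.Injective (fun w : (α × β) × γ => ((w.2, w.1.2), w.1.1)) := by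
    intro u v hv
    obtain ⟨⟨a, b⟩, c⟩ := u; obtain ⟨⟨a', b'⟩, c'⟩ := v
    simp [Prod.ext_iff] at hv ⊢
    tauto
  have e5 : ent p (fun ω => ((Z ω, Y ω), X ω)) = ent p (fun ω => ((X ω, Y ω), Z ω)) :=
    ent_comp_inj p (fun ω => ((X ω, Y ω), Z ω))
      (fun w : (α × β) × γ => ((w.2, w.1.2), w.1.1)) inj5
  have S1 := ent_submod p hp0 hp1 Z Y X
  have S2 := ent_submod p hp0 hp1 X Y Z
  have M := ent_mono p hp0 Z (fun ω => (X ω, Y ω))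
  linarith
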